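/- If the unitary matrices U_1, …, U_m form an irreducible set (they have no common invariant subspace of ℂ^d other than {0} and ℂ^d), and X ≠ 0 is a d×d complex matrix satisfying Φ(X) = λ·X with |λ| = 1, then X is an invertible matrix and λ is a root of unity (λ^k = 1 for some natural number k ≥ 1). -/

import Mathlib

open Matrix BigOperators

private lemma traceHH {d : ℕ} (A : Matrix (Fin d) (Fin d) ℂ) :
    Matrix.trace (Aᴴ * A) = ((∑ i, ∑ j, Complex.normSq (A i j) : ℝ) : ℂ) := by
  push_cast
  rw [Matrix.trace]
  simp only [Matrix.diag_apply, Matrix.mul_apply, Matrix.conjTranspose_apply,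
    ← Complex.normSq_eq_conj_mul_self]
  rw [Finset.sum_comm]
  simp [Complex.normSq_eq_conj_mul_self]

private lemma traceHH_real {d : ℕ} (A : Matrix (Fin d) (Fin d) ℂ) :
    star (Matrix.trace (Aᴴ * A)) = Matrix.trace (Aᴴ * A) := by
  rw [traceHH]; exact Complex.conj_ofReal _

private lemma expand_trace {d : ℕ} (B C : Matrix (Fin d) (Fin d) ℂ) :
    Matrix.trace ((B - C)ᴴ * (B - C)) =
      Matrix.trace (Bᴴ * B) - Matrix.trace (Cᴴ * B) - Matrix.trace (Bᴴ * C)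
        + Matrix.trace (Cᴴ * C) := by
  simp only [Matrix.conjTranspose_sub, Matrix.sub_mul, Matrix.mul_sub, Matrix.trace_sub]
  ring

theorem stmt_17 {d m : ℕ} (hd : 1 ≤ d)
    (U : Fin m → Matrix (Fin d) (Fin d) ℂ)
    (hU : ∀ i, U i ∈ Matrix.unitaryGroup (Fin d) ℂ)
    (hirr : ∀ W : Submodule ℂ (Fin d → ℂ),
      (∀ i, W.map (U i).mulVecLin ≤ W) → W = ⊥ ∨ W = ⊤)
    (p : Fin m → ℝ) (hp : ∀ i, 0 < p i) (hpsum : ∑ i, p i = 1)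
    (Φ : Matrix (Fin d) (Fin d) ℂ → Matrix (Fin d) (Fin d) ℂ)
    (hΦ : ∀ ρ, Φ ρ = ∑ i, (p i : ℂ) • (U i * ρ * (U i)ᴴ))
    (lam : ℂ) (hlam : ‖lam‖ = 1)
    (X : Matrix (Fin d) (Fin d) ℂ) (hX : X ≠ 0)
    (heig : Φ X = lam • X) :
    IsUnit X ∧ ∃ k : ℕ, 1 ≤ k ∧ lam ^ k = 1 := by
  have hlam0 : lam ≠ 0 := by
    intro h; rw [h] at hlam; simp at hlam
  have hll : (starRingEnd ℂ) lam * lam = 1 := by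
    rw [← Complex.normSq_eq_conj_mul_self, Complex.normSq_eq_norm_sq, hlam]; norm_num
  set A : Fin m → Matrix (Fin d) (Fin d) ℂ := fun i => U i * X * (U i)ᴴ with hA
  have hUr : ∀ i, U i * (U i)ᴴ = 1 := fun i =>
    (Matrix.mem_unitaryGroup_iff.mp (hU i))
  have hUl : ∀ i, (U i)ᴴ * U i = 1 := fun i =>
    (Matrix.mem_unitaryGroup_iff'.mp (hU i))
  have hsum : ∑ i, (p i : ℂ) • A i = lam • X := by rw [← heig, hΦ]
  have hpsum' : ∑ i, (p i : ℂ) = 1 := by exact_mod_cast hpsum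
  set t : ℂ := Matrix.trace (Xᴴ * X) with ht
  have htre : star t = t := traceHH_real X
  have htrA : ∀ i, Matrix.trace ((A i)ᴴ * A i) = t := by
    intro i
    have h1 : (A i)ᴴ * A i = U i * (Xᴴ * X) * (U i)ᴴ := by
      simp only [hA, Matrix.conjTranspose_mul, Matrix.conjTranspose_conjTranspose]
      rw [Matrix.mul_assoc, Matrix.mul_assoc, Matrix.mul_assoc]
      rw [← Matrix.mul_assoc (U i)ᴴ (U i), hUl i, Matrix.one_mul]
      rw [Matrix.mul_assoc, Matrix.mul_assoc]
    rw [h1, Matrix.trace_mul_cycle, ← Matrix.mul_assoc, hUl i, Matrix.one_mul]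
  have hXA : ∑ i, (p i : ℂ) * Matrix.trace (Xᴴ * A i) = lam * t := by
    have : ∑ i, (p i : ℂ) * Matrix.trace (Xᴴ * A i)
        = Matrix.trace (Xᴴ * (∑ i, (p i : ℂ) • A i)) := by
      simp [Matrix.mul_sum, Matrix.mul_smul, Matrix.trace_smul, smul_eq_mul]
    rw [this, hsum, Matrix.mul_smul, Matrix.trace_smul, smul_eq_mul]
  have hAX : ∑ i, (p i : ℂ) * Matrix.trace ((A i)ᴴ * X) = (starRingEnd ℂ) lam * t := by
    have h1 : ∀ i, Matrix.trace ((A i)ᴴ * X) = star (Matrix.trace (Xᴴ * A i)) := by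
      intro i
      rw [← Matrix.trace_conjTranspose]
      congr 1
      simp [hA, Matrix.conjTranspose_mul, Matrix.mul_assoc]
    calc ∑ i, (p i : ℂ) * Matrix.trace ((A i)ᴴ * X)
        = star (∑ i, (p i : ℂ) * Matrix.trace (Xᴴ * A i)) := by
          rw [star_sum]
          refine Finset.sum_congr rfl fun i _ => ?_
          rw [h1 i, star_mul', Complex.star_def, Complex.conj_ofReal]
      _ = (starRingEnd ℂ) lam * t := by
          rw [hXA, star_mul', htre]; rfl
  have hS : ∑ i, (p i : ℂ) *
      Matrix.trace ((A i - lam • X)ᴴ * (A i - lam • X)) = 0 := by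
    have key : ∀ i ∈ Finset.univ, (p i : ℂ) *
        Matrix.trace ((A i - lam • X)ᴴ * (A i - lam • X))
        = 2 * t * (p i : ℂ)
          - (starRingEnd ℂ) lam * ((p i : ℂ) * Matrix.trace (Xᴴ * A i))
          - lam * ((p i : ℂ) * Matrix.trace ((A i)ᴴ * X)) := by
      intro i _
      rw [expand_trace, htrA i]
      simp only [Matrix.conjTranspose_smul, Matrix.smul_mul, Matrix.mul_smul,
        Matrix.trace_smul, smul_eq_mul, Complex.star_def, ← ht]
      linear_combination ((p i : ℂ) * t) * hll
    rw [Finset.sum_congr rfl key]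
    rw [Finset.sum_sub_distrib, Finset.sum_sub_distrib, ← Finset.mul_sum,
      ← Finset.mul_sum, ← Finset.mul_sum, hXA, hAX, hpsum']
    have hll' : lam * (starRingEnd ℂ) lam = 1 := by rw [mul_comm]; exact hll
    rw [← mul_assoc, ← mul_assoc, hll, hll']
    ring
  -- deduce each A i = lam • X
  have hAi : ∀ i, A i = lam • X := by
    have hS' : ∑ i, p i * (∑ a, ∑ b, Complex.normSq ((A i - lam • X) a b)) = 0 := by
      have : ∑ i, (p i : ℂ) *
          ((∑ a, ∑ b, Complex.normSq ((A i - lam • X) a b) : ℝ) : ℂ) = 0 := by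
        rw [← hS]
        exact Finset.sum_congr rfl fun i _ => by rw [traceHH]
      exact_mod_cast this
    have hz := (Finset.sum_eq_zero_iff_of_nonneg (fun i _ => by
      have h1 : (0:ℝ) ≤ ∑ a, ∑ b, Complex.normSq ((A i - lam • X) a b) :=
        Finset.sum_nonneg fun a _ => Finset.sum_nonneg fun b _ => Complex.normSq_nonneg _
      exact mul_nonneg (hp i).le h1)).mp hS'
    intro i
    have hri : ∑ a, ∑ b, Complex.normSq ((A i - lam • X) a b) = 0 := by
      have := hz i (Finset.mem_univ i)
      rcases mul_eq_zero.mp this with h | h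
      · exact absurd h (ne_of_gt (hp i))
      · exact h
    have hab := (Finset.sum_eq_zero_iff_of_nonneg (fun a _ =>
      Finset.sum_nonneg fun b _ => Complex.normSq_nonneg _)).mp hri
    have h0 : A i - lam • X = 0 := by
      ext a b
      have := (Finset.sum_eq_zero_iff_of_nonneg (fun b _ =>
        Complex.normSq_nonneg _)).mp (hab a (Finset.mem_univ a)) b (Finset.mem_univ b)
      simpa [Complex.normSq_eq_zero] using this
    exact sub_eq_zero.mp h0
  -- commutation relation
  have hcomm : ∀ i, X * U i = lam⁻¹ • (U i * X) := by
    intro i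
    have h2 : A i * U i = (lam • X) * U i := by rw [hAi i]
    simp only [hA, Matrix.smul_mul] at h2
    rw [Matrix.mul_assoc (U i * X), hUl i, Matrix.mul_one] at h2
    rw [h2, smul_smul, inv_mul_cancel₀ hlam0, one_smul]
  -- kernel of X is invariant
  set W : Submodule ℂ (Fin d → ℂ) := LinearMap.ker X.mulVecLin with hW
  have hWinv : ∀ i, W.map (U i).mulVecLin ≤ W := by
    intro i x hx
    rcases hx with ⟨v, hv, rfl⟩
    have hv' : X *ᵥ v = 0 := hv
    show X *ᵥ ((U i).mulVecLin v) = 0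
    simp only [Matrix.mulVecLin_apply]
    rw [Matrix.mulVec_mulVec, hcomm i, Matrix.smul_mulVec,
      ← Matrix.mulVec_mulVec, hv', Matrix.mulVec_zero, smul_zero]
  have hXunit : IsUnit X := by
    rcases hirr W hWinv with hbot | htop
    · exact Matrix.mulVec_injective_iff_isUnit.mp
        (LinearMap.ker_eq_bot.mp hbot : Function.Injective X.mulVecLin)
    · exfalso
      apply hX
      ext a b
      have hv : X *ᵥ (Pi.single b 1) = 0 := by
        have hmem : (Pi.single b 1 : Fin d → ℂ) ∈ W := by rw [htop]; trivial
        simpa [hW, Matrix.mulVecLin_apply] using hmem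
      have := congrFun hv a
      simpa using this
  refine ⟨hXunit, d, hd, ?_⟩
  -- determinant argument
  have hm : 0 < m := by
    rcases Nat.eq_zero_or_pos m with h | h
    · subst h; simp at hpsum
    · exact h
  have hdX : X.det ≠ 0 := by
    have := (Matrix.isUnit_iff_isUnit_det X).mp hXunit
    exact IsUnit.ne_zero this
  set i0 : Fin m := ⟨0, hm⟩
  have hdet := congrArg Matrix.det (hAi i0)
  rw [Matrix.det_mul, Matrix.det_mul, Matrix.det_smul] at hdet
  have hdetU : (U i0).det * (U i0)ᴴ.det = 1 := by
    rw [← Matrix.det_mul, hUr i0, Matrix.det_one]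
  simp only [Fintype.card_fin] at hdet
  have h3 : lam ^ d * X.det = 1 * X.det := by
    rw [one_mul]; linear_combination -hdet + X.det * hdetU
  exact mul_right_cancel₀ hdX h3
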